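/- Let g : ℝ^d → ℝ ∪ {+∞} be proper, convex, lower semicontinuous and let f : ℝ^d → ℝ be a convex differentiable function whose gradient ∇f is L-Lipschitz. Fix x ∈ ℝ^d, a stepsize α with 0 < α ≤ 1/L, and set x⁺ = prox_{αg}(x − α∇f(x)). Then for every z ∈ ℝ^d with (g+f)(z) ≤ (g+f)(x⁺), one has ‖x⁺ − z‖ ≤ ‖x − z‖. -/

import Mathlib

set_option maxHeartbeats 1600000

open scoped InnerProductSpace

section Helpers

variable {E : Type*} [NormedAddCommGroup E] [InnerProductSpace ℝ E] [CompleteSpace E]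

lemma hasDerivAt_line (f : E → ℝ) (s : E) {p : E}
    (hd : HasGradientAt f s p) (x v : E) (t : ℝ) (hpt : p = x + t • v) :
    HasDerivAt (fun t : ℝ => f (x + t • v)) ⟪s, v⟫_ℝ t := by
  have hc : HasDerivAt (fun t : ℝ => x + t • v) v t := by
    simpa using ((hasDerivAt_id t).smul_const v).const_add x
  have hfd := hd.hasFDerivAt
  rw [hpt] at hfd
  have := hfd.comp_hasDerivAt t hc
  simp [InnerProductSpace.toDual_apply_apply] at this
  exact this

lemma convex_first_order (f : E → ℝ) (s : E) (x : E)
    (hf : ConvexOn ℝ Set.univ f) (hd : HasGradientAt f s x) (z : E) :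
    f x + ⟪s, z - x⟫_ℝ ≤ f z := by
  set v := z - x with hv
  have hD : HasDerivAt (fun t : ℝ => f (x + t • v)) ⟪s, v⟫_ℝ 0 :=
    hasDerivAt_line f s hd x v 0 (by simp)
  have hslope : Filter.Tendsto (slope (fun t : ℝ => f (x + t • v)) 0)
      (nhdsWithin 0 (Set.Ioi 0)) (nhds ⟪s, v⟫_ℝ) :=
    (hasDerivAt_iff_tendsto_slope.mp hD).mono_left
      (nhdsWithin_mono _ (fun t ht => by
        simp only [Set.mem_compl_iff, Set.mem_singleton_iff]
        exact ne_of_gt ht))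
  have hb : ∀ᶠ t in nhdsWithin (0:ℝ) (Set.Ioi 0),
      slope (fun t : ℝ => f (x + t • v)) 0 t ≤ f z - f x := by
    filter_upwards [Ioc_mem_nhdsGT_of_mem (Set.mem_Ico.mpr ⟨le_rfl, zero_lt_one⟩)] with t ht
    have hcomb := hf.2 (Set.mem_univ x) (Set.mem_univ z)
      (by linarith [ht.2] : (0:ℝ) ≤ 1 - t) ht.1.le (by ring)
    have hpt : x + t • v = (1 - t) • x + t • z := by
      rw [hv]; module
    have hft : f (x + t • v) ≤ (1 - t) * f x + t * f z := by
      rw [hpt]; simpa using hcomb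
    have h0 : x + (0:ℝ) • v = x := by simp
    rw [slope_def_field]
    rw [h0, sub_zero]
    rw [div_le_iff₀ ht.1]
    nlinarith [ht.1]
  have := le_of_tendsto hslope hb
  linarith

lemma descent_lemma (f : E → ℝ) (f' : E → E)
    (hf : ∀ p, HasGradientAt f (f' p) p) {L : ℝ} (hL : 0 ≤ L)
    (hlip : ∀ a b, ‖f' a - f' b‖ ≤ L * ‖a - b‖) (x y : E) :
    f y ≤ f x + ⟪f' x, y - x⟫_ℝ + L / 2 * ‖y - x‖ ^ 2 := by
  set v := y - x with hv
  set ψ : ℝ → ℝ := fun t => f (x + t • v) - t * ⟪f' x, v⟫_ℝ - L / 2 * t ^ 2 * ‖v‖ ^ 2 with hψ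
  have hder : ∀ t : ℝ, HasDerivAt ψ
      (⟪f' (x + t • v), v⟫_ℝ - ⟪f' x, v⟫_ℝ - L * t * ‖v‖ ^ 2) t := by
    intro t
    have h1 : HasDerivAt (fun t : ℝ => f (x + t • v)) ⟪f' (x + t • v), v⟫_ℝ t :=
      hasDerivAt_line f (f' (x + t • v)) (hf _) x v t rfl
    have h2 : HasDerivAt (fun t : ℝ => t * ⟪f' x, v⟫_ℝ) ⟪f' x, v⟫_ℝ t := by
      simpa using (hasDerivAt_id t).mul_const ⟪f' x, v⟫_ℝ
    have h3 : HasDerivAt (fun t : ℝ => L / 2 * t ^ 2 * ‖v‖ ^ 2)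
        (L * t * ‖v‖ ^ 2) t := by
      have := ((hasDerivAt_pow 2 t).const_mul (L / 2)).mul_const (‖v‖ ^ 2)
      refine this.congr_deriv ?_
      ring
    exact (h1.sub h2).sub h3
  have hanti : AntitoneOn ψ (Set.Icc 0 1) := by
    apply antitoneOn_of_deriv_nonpos (convex_Icc 0 1)
    · exact Continuous.continuousOn
        (continuous_iff_continuousAt.mpr fun t => (hder t).continuousAt)
    · exact fun t _ => ((hder t).differentiableAt).differentiableWithinAt
    · intro t ht
      rw [interior_Icc] at ht
      rw [(hder t).deriv]
      have hsub : ⟪f' (x + t • v), v⟫_ℝ - ⟪f' x, v⟫_ℝ = ⟪f' (x + t • v) - f' x, v⟫_ℝ := by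
        rw [inner_sub_left]
      have hib : ⟪f' (x + t • v) - f' x, v⟫_ℝ ≤ ‖f' (x + t • v) - f' x‖ * ‖v‖ :=
        real_inner_le_norm _ _
      have hl := hlip (x + t • v) x
      have hn : x + t • v - x = t • v := by abel
      rw [hn, norm_smul, Real.norm_eq_abs, abs_of_pos ht.1] at hl
      have hvn : (0:ℝ) ≤ ‖v‖ := norm_nonneg v
      nlinarith [mul_le_mul_of_nonneg_right hl hvn]
  have h10 : ψ 1 ≤ ψ 0 := hanti (Set.mem_Icc.mpr ⟨le_rfl, zero_le_one⟩)
    (Set.mem_Icc.mpr ⟨zero_le_one, le_rfl⟩) zero_le_one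
  have e1 : x + (1:ℝ) • v = y := by rw [hv]; simp
  have e0 : x + (0:ℝ) • v = x := by simp
  simp only [hψ, e1, e0, one_pow, mul_one, one_mul, zero_mul, mul_zero, sub_zero,
    zero_pow, pow_two] at h10
  nlinarith [h10]

end Helpers

/-- Convexity for an extended-real-valued function. -/
def ERealConvex {d : ℕ} (g : EuclideanSpace ℝ (Fin d) → EReal) : Prop :=
  ∀ x y : EuclideanSpace ℝ (Fin d), ∀ a b : ℝ, 0 ≤ a → 0 ≤ b → a + b = 1 →
    g (a • x + b • y) ≤ (a : EReal) * g x + (b : EReal) * g y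

/-- `g` is proper: it never takes the value `⊥` and is not identically `⊤`. -/
def ERealProper {d : ℕ} (g : EuclideanSpace ℝ (Fin d) → EReal) : Prop :=
  (∀ x, g x ≠ ⊥) ∧ (∃ x, g x ≠ ⊤)

/-- `p = prox_{αg}(y)`, i.e. `p` minimizes `z ↦ g z + (1/(2α))‖z - y‖²`. -/
def IsProx {d : ℕ} (g : EuclideanSpace ℝ (Fin d) → EReal) (α : ℝ)
    (y p : EuclideanSpace ℝ (Fin d)) : Prop :=
  ∀ z, g p + ((1 / (2 * α) * ‖p - y‖ ^ 2 : ℝ) : EReal)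
      ≤ g z + ((1 / (2 * α) * ‖z - y‖ ^ 2 : ℝ) : EReal)

/-- After a proximal-gradient step `x⁺ = prox_{αg}(x - α∇f(x))` with `0 < α ≤ 1/L`,
every point `z` with objective value at most `(g+f)(x⁺)` satisfies
`‖x⁺ - z‖ ≤ ‖x - z‖`. -/
theorem proxGrad_distance_decrease {d : ℕ} {L : ℝ}
    (g : EuclideanSpace ℝ (Fin d) → EReal)
    (hg_proper : ERealProper g) (hg_convex : ERealConvex g)
    (hg_lsc : LowerSemicontinuous g)
    (f : EuclideanSpace ℝ (Fin d) → ℝ)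
    (f' : EuclideanSpace ℝ (Fin d) → EuclideanSpace ℝ (Fin d))
    (hf_convex : ConvexOn ℝ Set.univ f)
    (hf_diff : ∀ y, HasGradientAt f (f' y) y)
    (hf_lip : ∀ x y, ‖f' x - f' y‖ ≤ L * ‖x - y‖)
    (x : EuclideanSpace ℝ (Fin d)) (α : ℝ) (hα : 0 < α) (hαL : α ≤ 1 / L)
    (xp : EuclideanSpace ℝ (Fin d))
    (hxp : IsProx g α (x - α • f' x) xp) :
    ∀ z : EuclideanSpace ℝ (Fin d),
      g z + (f z : EReal) ≤ g xp + (f xp : EReal) → ‖xp - z‖ ≤ ‖x - z‖ := by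
  intro z hz
  -- L is positive
  have hL : 0 < L := by
    by_contra h
    push_neg at h
    have h1 : (1:ℝ) / L ≤ 0 := div_nonpos_of_nonneg_of_nonpos zero_le_one h
    linarith
  have hαL1 : α * L ≤ 1 := by
    rw [le_div_iff₀ hL] at hαL
    exact hαL
  set s := f' x with hs
  set y := x - α • s with hy
  -- g xp is finite
  obtain ⟨w, hw⟩ := hg_proper.2
  have hxp_top : g xp ≠ ⊤ := by
    intro htop
    have h := hxp w
    rw [htop, EReal.top_add_coe, top_le_iff] at h
    have hw' : g w + ((1 / (2 * α) * ‖w - y‖ ^ 2 : ℝ) : EReal) < ⊤ := by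
      rw [← EReal.coe_toReal hw (hg_proper.1 w), ← EReal.coe_add]
      exact EReal.coe_lt_top _
    rw [h] at hw'
    exact lt_irrefl _ hw'
  obtain ⟨a, ha⟩ : ∃ r : ℝ, g xp = (r : EReal) :=
    ⟨(g xp).toReal, (EReal.coe_toReal hxp_top (hg_proper.1 xp)).symm⟩
  -- g z is finite
  have hz_top : g z ≠ ⊤ := by
    intro htop
    rw [htop, ha, EReal.top_add_coe, ← EReal.coe_add, top_le_iff] at hz
    exact (EReal.coe_lt_top _).ne hz
  obtain ⟨b, hb⟩ : ∃ r : ℝ, g z = (r : EReal) :=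
    ⟨(g z).toReal, (EReal.coe_toReal hz_top (hg_proper.1 z)).symm⟩
  have hab : b + f z ≤ a + f xp := by
    rw [ha, hb, ← EReal.coe_add, ← EReal.coe_add, EReal.coe_le_coe_iff] at hz
    exact hz
  -- prox inequality
  set K := ‖z - xp‖ ^ 2 with hK
  set I' := ⟪xp - y, z - xp⟫_ℝ with hI'
  have hstep : ∀ t : ℝ, t ∈ Set.Ioc (0:ℝ) 1 → -I' ≤ α * (b - a) + t / 2 * K := by
    intro t ht
    set u := xp + t • (z - xp) with hu
    have hgu_le : g u ≤ (((1 - t) * a + t * b : ℝ) : EReal) := by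
      have hcvx := hg_convex xp z (1 - t) t (by linarith [ht.2]) ht.1.le (by ring)
      have hpt : (1 - t) • xp + t • z = u := by rw [hu]; module
      rw [hpt] at hcvx
      rw [ha, hb] at hcvx
      calc g u ≤ ((1 - t : ℝ) : EReal) * (a : EReal) + ((t : ℝ) : EReal) * (b : EReal) := hcvx
        _ = (((1 - t) * a + t * b : ℝ) : EReal) := by
            rw [← EReal.coe_mul, ← EReal.coe_mul, ← EReal.coe_add]
    have hu_top : g u ≠ ⊤ := (hgu_le.trans_lt (EReal.coe_lt_top _)).ne
    obtain ⟨c, hc⟩ : ∃ r : ℝ, g u = (r : EReal) :=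
      ⟨(g u).toReal, (EReal.coe_toReal hu_top (hg_proper.1 u)).symm⟩
    have hcle : c ≤ (1 - t) * a + t * b := by
      rw [hc, EReal.coe_le_coe_iff] at hgu_le
      exact hgu_le
    have hprx := hxp u
    rw [ha, hc, ← EReal.coe_add, ← EReal.coe_add, EReal.coe_le_coe_iff] at hprx
    -- expand ‖u - y‖²
    have huy : u - y = (xp - y) + t • (z - xp) := by rw [hu]; abel
    have hexp : ‖u - y‖ ^ 2 = ‖xp - y‖ ^ 2 + 2 * t * I' + t ^ 2 * K := by
      rw [huy, norm_add_sq_real, real_inner_smul_right, norm_smul,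
        Real.norm_eq_abs, abs_of_pos ht.1, hI', hK]
      ring
    rw [hexp] at hprx
    set N := ‖xp - y‖ ^ 2 with hN
    -- multiply by 2α
    have h2α : (0:ℝ) < 2 * α := by linarith
    have hmul := mul_le_mul_of_nonneg_left hprx h2α.le
    have hform : 2 * α * (a + 1 / (2 * α) * N) = 2 * α * a + N := by
      field_simp
    have hform2 : 2 * α * (c + 1 / (2 * α) * (N + 2 * t * I' + t ^ 2 * K)) =
        2 * α * c + N + 2 * t * I' + t ^ 2 * K := by
      field_simp
      ring
    rw [hform, hform2] at hmul
    -- so 0 ≤ 2α(c - a) + 2t I' + t² K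
    have h3 : 0 ≤ 2 * α * (c - a) + 2 * t * I' + t ^ 2 * K := by linarith
    have hca : c - a ≤ t * (b - a) := by nlinarith [hcle]
    have h5 : 2 * α * (c - a) ≤ 2 * α * (t * (b - a)) :=
      mul_le_mul_of_nonneg_left hca h2α.le
    have h4 : 0 ≤ 2 * α * (t * (b - a)) + 2 * t * I' + t ^ 2 * K := by linarith
    have h4' : 2 * t * (α * (b - a) + I' + t / 2 * K) =
        2 * α * (t * (b - a)) + 2 * t * I' + t ^ 2 * K := by ring
    have h2t : (0:ℝ) < 2 * t := by linarith [ht.1]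
    have h6 : 0 ≤ α * (b - a) + I' + t / 2 * K := by
      by_contra hneg
      push_neg at hneg
      have hp := mul_pos h2t (neg_pos.mpr hneg)
      nlinarith [hp, h4, h4']
    linarith
  -- take t → 0⁺
  have hprox : -I' ≤ α * (b - a) := by
    have hten : Filter.Tendsto (fun t : ℝ => α * (b - a) + t / 2 * K)
        (nhdsWithin 0 (Set.Ioi 0)) (nhds (α * (b - a))) := by
      have hcont : Filter.Tendsto (fun t : ℝ => α * (b - a) + t / 2 * K)
          (nhds 0) (nhds (α * (b - a) + 0 / 2 * K)) := by
        apply Continuous.tendsto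
        continuity
      simp only [zero_div, zero_mul, add_zero] at hcont
      exact hcont.mono_left nhdsWithin_le_nhds
    apply ge_of_tendsto hten
    filter_upwards [Ioc_mem_nhdsGT_of_mem (Set.mem_Ico.mpr ⟨le_rfl, zero_lt_one⟩)] with t ht
    exact hstep t ht
  -- first-order convexity and descent
  have hconv : f x + ⟪s, z - x⟫_ℝ ≤ f z :=
    convex_first_order f s x hf_convex (hf_diff x) z
  have hdesc : f xp ≤ f x + ⟪s, xp - x⟫_ℝ + L / 2 * ‖xp - x‖ ^ 2 :=
    descent_lemma f f' hf_diff hL.le hf_lip x xp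
  -- expand the prox inner product
  set I1 := ⟪x - xp, z - xp⟫_ℝ with hI1
  set I2 := ⟪s, z - x⟫_ℝ with hI2
  set I3 := ⟪s, xp - x⟫_ℝ with hI3
  set N2 := ‖xp - x‖ ^ 2 with hN2
  have hIexp : -I' = I1 - α * (I2 - I3) := by
    have h1 : xp - y = (xp - x) + α • s := by rw [hy]; abel
    rw [hI', h1, inner_add_left, real_inner_smul_left, hI1, hI2, hI3]
    have h2 : ⟪xp - x, z - xp⟫_ℝ = -⟪x - xp, z - xp⟫_ℝ := by
      rw [show xp - x = -(x - xp) from (neg_sub x xp).symm, inner_neg_left]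
    have h3 : ⟪s, z - xp⟫_ℝ = ⟪s, z - x⟫_ℝ - ⟪s, xp - x⟫_ℝ := by
      rw [← inner_sub_right]
      congr 1
      abel
    rw [h2, h3]
    ring
  -- combine: I1 ≤ N2 / 2
  have hI1bound : I1 ≤ N2 / 2 := by
    have e1 : I1 - α * (I2 - I3) ≤ α * (b - a) := by rw [← hIexp]; exact hprox
    have e2 : α * I2 ≤ α * (f z - f x) :=
      mul_le_mul_of_nonneg_left (by linarith) hα.le
    have e3 : α * (-I3) ≤ α * (f x - f xp + L / 2 * N2) :=
      mul_le_mul_of_nonneg_left (by linarith) hα.le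
    have e4 : α * (b - a + (f z - f xp)) ≤ 0 :=
      mul_nonpos_of_nonneg_of_nonpos hα.le (by linarith)
    have e5 : α * (L / 2 * N2) ≤ 1 / 2 * N2 := by
      have hN2nn : (0:ℝ) ≤ N2 := by rw [hN2]; positivity
      nlinarith
    nlinarith [e1, e2, e3, e4, e5]
  -- conclude
  have hsq : ‖xp - z‖ ^ 2 ≤ ‖x - z‖ ^ 2 := by
    have hxz : x - z = (x - xp) + (xp - z) := by abel
    rw [hxz, norm_add_sq_real]
    have h2 : ⟪x - xp, xp - z⟫_ℝ = -I1 := by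
      rw [show xp - z = -(z - xp) from (neg_sub z xp).symm, inner_neg_right, hI1]
    rw [h2]
    have hnn : ‖x - xp‖ ^ 2 = N2 := by rw [hN2, norm_sub_rev]
    rw [hnn]
    linarith
  nlinarith [hsq, norm_nonneg (xp - z), norm_nonneg (x - z)]
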